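/- For every norm ⦀·⦀ on ℝ^d and every function φ : {0,…,d} → ℝ̄, the Capra conjugate of φ∘ℓ0 is given by (φ∘ℓ0)^¢(y) = sup_{l ∈ {0,…,d}} ( ⦀y⦀_{l,★} − φ(l) ) for all y ∈ ℝ^d, with the convention ⦀·⦀_{0,★} = 0 and where the subtraction is the Moreau lower addition of ⦀y⦀_{l,★} and −φ(l). -/

import Mathlib

open scoped BigOperators

noncomputable section

/-- The Euclidean pairing `⟨x,y⟩ = ∑ i, x i * y i` on `Fin d → ℝ`. -/
def dotp {d : ℕ} (x y : Fin d → ℝ) : ℝ := ∑ i, x i * y i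

/-- The coordinate subspace `R_K` of vectors vanishing outside `K`. -/
def RK {d : ℕ} (K : Finset (Fin d)) : Set (Fin d → ℝ) := {x | ∀ j ∉ K, x j = 0}

/-- Orthogonal projection onto `R_K`. -/
def projK {d : ℕ} (K : Finset (Fin d)) (x : Fin d → ℝ) : Fin d → ℝ :=
  fun i => if i ∈ K then x i else 0

/-- The ℓ0 pseudonorm: number of nonzero components. -/
def ell0 {d : ℕ} (x : Fin d → ℝ) : ℕ := (Function.support x).ncard

/-- `N` is a norm on `ℝ^d`. -/
structure IsNorm {d : ℕ} (N : (Fin d → ℝ) → ℝ) : Prop where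
  eq_zero_iff : ∀ x, N x = 0 ↔ x = 0
  smul : ∀ (c : ℝ) (x : Fin d → ℝ), N (c • x) = |c| * N x
  triangle : ∀ x y, N (x + y) ≤ N x + N y

/-- `⦀y⦀_{K,★}`: the dual norm (w.r.t. the Euclidean pairing), on the subspace `R_K`,
of the restriction of `N` to `R_K`. -/
def restStar {d : ℕ} (N : (Fin d → ℝ) → ℝ) (K : Finset (Fin d)) (y : Fin d → ℝ) : ℝ :=
  sSup {r | ∃ x ∈ RK K, N x ≤ 1 ∧ r = dotp x y}

/-- The dual coordinate-k norm `⦀y⦀_{k,★} = sup_{|K| ≤ k} ⦀y_K⦀_{K,★}`. -/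
def dualCoord {d : ℕ} (N : (Fin d → ℝ) → ℝ) (k : ℕ) (y : Fin d → ℝ) : ℝ :=
  sSup {r | ∃ K : Finset (Fin d), K.card ≤ k ∧ r = restStar N K (projK K y)}

/-- The coordinate-k norm: the dual norm of the dual coordinate-k norm. -/
def coordNorm {d : ℕ} (N : (Fin d → ℝ) → ℝ) (k : ℕ) (x : Fin d → ℝ) : ℝ :=
  sSup {r | ∃ y : Fin d → ℝ, dualCoord N k y ≤ 1 ∧ r = dotp x y}

/-- The Capra coupling `¢(x,y) = ⟨x,y⟩/⦀x⦀` (with `¢(0,y) = 0`). -/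
def capra {d : ℕ} (N : (Fin d → ℝ) → ℝ) (x y : Fin d → ℝ) : ℝ :=
  if x = 0 then 0 else dotp x y / N x

/-- Capra conjugate `f^¢(y) = sup_x ( ¢(x,y) ∔ (−f(x)) )`.
(EReal addition is the Moreau lower addition: `⊤ + ⊥ = ⊥`.) -/
def capraConj {d : ℕ} (N : (Fin d → ℝ) → ℝ) (f : (Fin d → ℝ) → EReal)
    (y : Fin d → ℝ) : EReal :=
  ⨆ x : Fin d → ℝ, ((capra N x y : ℝ) : EReal) + (- f x)

/-- Capra biconjugate `f^{¢¢'}(x) = sup_y ( ¢(x,y) ∔ (−f^¢(y)) )`. -/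
def capraBiconj {d : ℕ} (N : (Fin d → ℝ) → ℝ) (f : (Fin d → ℝ) → EReal)
    (x : Fin d → ℝ) : EReal :=
  ⨆ y : Fin d → ℝ, ((capra N x y : ℝ) : EReal) + (- capraConj N f y)

/-- Fenchel conjugate `g^★(y) = sup_x ( ⟨x,y⟩ ∔ (−g(x)) )`. -/
def fenchelConj {d : ℕ} (g : (Fin d → ℝ) → EReal) (y : Fin d → ℝ) : EReal :=
  ⨆ x : Fin d → ℝ, ((dotp x y : ℝ) : EReal) + (- g x)

variable {d : ℕ} {N : (Fin d → ℝ) → ℝ}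

lemma N_zero (hN : IsNorm N) : N 0 = 0 := (hN.eq_zero_iff 0).mpr rfl

lemma N_neg (hN : IsNorm N) (x : Fin d → ℝ) : N (-x) = N x := by
  have := hN.smul (-1) x
  simpa using this

lemma N_nonneg (hN : IsNorm N) (x : Fin d → ℝ) : 0 ≤ N x := by
  have h := hN.triangle x (-x)
  rw [add_neg_cancel, N_zero hN, N_neg hN] at h
  linarith

lemma N_pos (hN : IsNorm N) {x : Fin d → ℝ} (hx : x ≠ 0) : 0 < N x := by
  rcases lt_or_eq_of_le (N_nonneg hN x) with h | h
  · exact h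
  · exact absurd ((hN.eq_zero_iff x).mp h.symm) hx

lemma N_sum_le (hN : IsNorm N) {ι : Type*} (s : Finset ι) (f : ι → Fin d → ℝ) :
    N (∑ i ∈ s, f i) ≤ ∑ i ∈ s, N (f i) := by
  classical
  induction s using Finset.cons_induction with
  | empty => simp [N_zero hN]
  | cons a s ha ih =>
    rw [Finset.sum_cons, Finset.sum_cons]
    exact (hN.triangle _ _).trans (by linarith)

lemma N_le_const (hN : IsNorm N) (x : Fin d → ℝ) :
    N x ≤ (∑ i, N (Pi.single i 1)) * ‖x‖ := by
  have hx : x = ∑ i, (x i) • (Pi.single i (1:ℝ) : Fin d → ℝ) := by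
    ext j
    rw [Finset.sum_apply]
    simp [Pi.single_apply]
  calc N x = N (∑ i, (x i) • (Pi.single i (1:ℝ) : Fin d → ℝ)) := by rw [← hx]
    _ ≤ ∑ i, N ((x i) • (Pi.single i (1:ℝ) : Fin d → ℝ)) := N_sum_le hN _ _
    _ ≤ ∑ i, ‖x‖ * N (Pi.single i (1:ℝ) : Fin d → ℝ) := by
        apply Finset.sum_le_sum
        intro i _
        rw [hN.smul]
        have h1 : |x i| ≤ ‖x‖ := by
          have := norm_le_pi_norm x i
          simpa using this
        exact mul_le_mul_of_nonneg_right h1 (N_nonneg hN _) |>.trans_eq rfl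
    _ = (∑ i, N (Pi.single i 1)) * ‖x‖ := by rw [Finset.sum_mul]; simp [mul_comm]

lemma N_sub_le (hN : IsNorm N) (a b : Fin d → ℝ) : N a - N b ≤ N (a - b) := by
  have := hN.triangle (a - b) b
  simp at this
  linarith

lemma N_continuous (hN : IsNorm N) : Continuous N := by
  set C := ∑ i, N (Pi.single i (1:ℝ)) with hC
  have hC0 : 0 ≤ C := Finset.sum_nonneg fun i _ => N_nonneg hN _
  have : LipschitzWith ⟨C, hC0⟩ N := by
    apply LipschitzWith.of_dist_le_mul
    intro a b
    rw [Real.dist_eq, dist_eq_norm]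
    rw [abs_sub_le_iff]
    constructor
    · exact (N_sub_le hN a b).trans (N_le_const hN _)
    · have := (N_sub_le hN b a).trans (N_le_const hN (b - a))
      rwa [← norm_neg, neg_sub] at this
  exact this.continuous

lemma N_lower (hN : IsNorm N) : ∃ c > 0, ∀ x : Fin d → ℝ, c * ‖x‖ ≤ N x := by
  by_cases hd : (Metric.sphere (0 : Fin d → ℝ) 1).Nonempty
  · obtain ⟨x₀, hx₀, hmin⟩ := (isCompact_sphere (0 : Fin d → ℝ) 1).exists_isMinOn hd
      (N_continuous hN).continuousOn
    have hx₀n : ‖x₀‖ = 1 := by simpa using hx₀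
    have hx₀0 : x₀ ≠ 0 := by intro h; rw [h] at hx₀n; simp at hx₀n
    refine ⟨N x₀, N_pos hN hx₀0, fun x => ?_⟩
    rcases eq_or_ne x 0 with rfl | hx
    · simp [N_zero hN]
    · have hxn : ‖x‖ ≠ 0 := norm_ne_zero_iff.mpr hx
      have hu : (‖x‖⁻¹ • x) ∈ Metric.sphere (0 : Fin d → ℝ) 1 := by
        simp [norm_smul, abs_of_nonneg (inv_nonneg.mpr (norm_nonneg x)),
          inv_mul_cancel₀ hxn]
      have h2 : N x₀ ≤ N (‖x‖⁻¹ • x) := hmin hu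
      rw [hN.smul, abs_of_nonneg (inv_nonneg.mpr (norm_nonneg x))] at h2
      rename' h2 => this
      have hxpos : (0:ℝ) < ‖x‖ := lt_of_le_of_ne (norm_nonneg x) (Ne.symm hxn)
      calc N x₀ * ‖x‖ ≤ (‖x‖⁻¹ * N x) * ‖x‖ := by nlinarith
        _ = N x := by field_simp
  · refine ⟨1, one_pos, fun x => ?_⟩
    have hx : x = 0 := by
      by_contra hx
      have hxn : ‖x‖ ≠ 0 := norm_ne_zero_iff.mpr hx
      exact hd ⟨‖x‖⁻¹ • x, by
        simp [norm_smul, abs_of_nonneg (inv_nonneg.mpr (norm_nonneg x)),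
          inv_mul_cancel₀ hxn]⟩
    simp [hx, N_zero hN]

lemma dotp_smul (a : ℝ) (x y : Fin d → ℝ) : dotp (a • x) y = a * dotp x y := by
  simp [dotp, Finset.mul_sum, mul_assoc]

lemma dotp_neg (x y : Fin d → ℝ) : dotp (-x) y = - dotp x y := by
  simp [dotp, ← Finset.sum_neg_distrib]

lemma dotp_zero (y : Fin d → ℝ) : dotp 0 y = 0 := by simp [dotp]

lemma dotp_continuous (y : Fin d → ℝ) : Continuous (fun x : Fin d → ℝ => dotp x y) := by
  unfold dotp
  exact continuous_finset_sum _ fun i _ => ((continuous_apply i).mul continuous_const)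

lemma abs_dotp_le (x y : Fin d → ℝ) : |dotp x y| ≤ ‖x‖ * ∑ i, |y i| := by
  calc |dotp x y| ≤ ∑ i, |x i * y i| := Finset.abs_sum_le_sum_abs _ _
    _ ≤ ∑ i, ‖x‖ * |y i| := by
        apply Finset.sum_le_sum
        intro i _
        rw [abs_mul]
        have : |x i| ≤ ‖x‖ := by simpa using norm_le_pi_norm x i
        exact mul_le_mul_of_nonneg_right this (abs_nonneg _)
    _ = ‖x‖ * ∑ i, |y i| := by rw [Finset.mul_sum]

lemma dotp_projK {K : Finset (Fin d)} {x : Fin d → ℝ} (hx : x ∈ RK K) (y : Fin d → ℝ) :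
    dotp x (projK K y) = dotp x y := by
  unfold dotp projK
  apply Finset.sum_congr rfl
  intro i _
  by_cases hi : i ∈ K
  · simp [hi]
  · simp [hi, hx i hi]

def suppF (x : Fin d → ℝ) : Finset (Fin d) := Finset.univ.filter fun i => x i ≠ 0

lemma support_eq (x : Fin d → ℝ) : Function.support x = ↑(suppF x) := by
  ext i; simp [suppF, Function.mem_support]

lemma ell0_eq_card (x : Fin d → ℝ) : ell0 x = (suppF x).card := by
  rw [ell0, support_eq, Set.ncard_coe_finset]

lemma ell0_le (x : Fin d → ℝ) : ell0 x ≤ d := by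
  rw [ell0_eq_card]
  simpa [suppF] using Finset.card_le_card (Finset.filter_subset _ (Finset.univ : Finset (Fin d)))

lemma ell0_zero : ell0 (0 : Fin d → ℝ) = 0 := by simp [ell0]

lemma mem_RK_suppF (x : Fin d → ℝ) : x ∈ RK (suppF x) := by
  intro j hj
  simp [suppF] at hj
  exact hj

/-- The set whose sup is `restStar N K (projK K y)`, rewritten with `y`. -/
def setK (N : (Fin d → ℝ) → ℝ) (K : Finset (Fin d)) (y : Fin d → ℝ) : Set ℝ :=
  {r | ∃ x ∈ RK K, N x ≤ 1 ∧ r = dotp x y}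

lemma restStar_proj_eq (K : Finset (Fin d)) (y : Fin d → ℝ) :
    restStar N K (projK K y) = sSup (setK N K y) := by
  unfold restStar setK
  congr 1
  ext r
  constructor
  · rintro ⟨x, hx, hx1, rfl⟩; exact ⟨x, hx, hx1, (dotp_projK hx y)⟩
  · rintro ⟨x, hx, hx1, rfl⟩; exact ⟨x, hx, hx1, (dotp_projK hx y).symm⟩

lemma dotp_bound (hN : IsNorm N) (y : Fin d → ℝ) :
    ∃ M : ℝ, 0 ≤ M ∧ ∀ x : Fin d → ℝ, N x ≤ 1 → |dotp x y| ≤ M := by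
  obtain ⟨c, hc, hlow⟩ := N_lower hN
  refine ⟨c⁻¹ * ∑ i, |y i|, by positivity, fun x hx => ?_⟩
  have hxn : ‖x‖ ≤ c⁻¹ := by
    rw [show c⁻¹ = 1/c by ring, le_div_iff₀ hc]; nlinarith [hlow x]
  calc |dotp x y| ≤ ‖x‖ * ∑ i, |y i| := abs_dotp_le x y
    _ ≤ c⁻¹ * ∑ i, |y i| := by
        have : (0:ℝ) ≤ ∑ i, |y i| := Finset.sum_nonneg fun i _ => abs_nonneg _
        nlinarith

lemma zero_mem_setK (hN : IsNorm N) (K : Finset (Fin d)) (y : Fin d → ℝ) :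
    (0:ℝ) ∈ setK N K y :=
  ⟨0, fun j _ => rfl, by simp [N_zero hN], (dotp_zero y).symm⟩

lemma setK_bddAbove (hN : IsNorm N) (K : Finset (Fin d)) (y : Fin d → ℝ) :
    BddAbove (setK N K y) := by
  obtain ⟨M, hM0, hM⟩ := dotp_bound hN y
  refine ⟨M, fun r hr => ?_⟩
  obtain ⟨x, _, hx1, rfl⟩ := hr
  exact (le_abs_self _).trans (hM x hx1)

lemma isClosed_RK (K : Finset (Fin d)) : IsClosed (RK K) := by
  have : RK K = ⋂ j ∈ ({x | x ∉ K} : Set (Fin d)), {x : Fin d → ℝ | x j = 0} := by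
    ext x; simp [RK]
  rw [this]
  exact isClosed_biInter fun j _ => isClosed_eq (continuous_apply j) continuous_const

lemma restStar_attain (hN : IsNorm N) (K : Finset (Fin d)) (y : Fin d → ℝ) :
    ∃ x ∈ RK K, N x ≤ 1 ∧ restStar N K (projK K y) = dotp x y ∧ 0 ≤ dotp x y := by
  obtain ⟨c, hc, hlow⟩ := N_lower hN
  set B : Set (Fin d → ℝ) := {x | x ∈ RK K ∧ N x ≤ 1} with hB
  have hBne : B.Nonempty := ⟨0, fun j _ => rfl, by simp [N_zero hN]⟩
  have hBc : IsCompact B := by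
    apply Metric.isCompact_of_isClosed_isBounded
    · exact (isClosed_RK K).inter (isClosed_le (N_continuous hN) continuous_const)
    · apply (Metric.isBounded_closedBall (x := (0 : Fin d → ℝ)) (r := c⁻¹)).subset
      rintro x ⟨_, hx1⟩
      simp only [Metric.mem_closedBall, dist_zero_right]
      rw [show c⁻¹ = 1/c by ring, le_div_iff₀ hc]; nlinarith [hlow x]
  obtain ⟨x₀, hx₀B, hmax⟩ := hBc.exists_isMaxOn hBne (dotp_continuous y).continuousOn
  have himg : setK N K y = (fun x => dotp x y) '' B := by
    ext r
    constructor
    · rintro ⟨x, hx, hx1, rfl⟩; exact ⟨x, ⟨hx, hx1⟩, rfl⟩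
    · rintro ⟨x, ⟨hx, hx1⟩, rfl⟩; exact ⟨x, hx, hx1, rfl⟩
  refine ⟨x₀, hx₀B.1, hx₀B.2, ?_, ?_⟩
  · rw [restStar_proj_eq, himg]
    apply le_antisymm
    · apply csSup_le (hBne.image _)
      rintro r ⟨x, hx, rfl⟩
      exact hmax hx
    · apply le_csSup
      · rw [← himg]; exact setK_bddAbove hN K y
      · exact ⟨x₀, hx₀B, rfl⟩
  · have h0 : (0:ℝ) = dotp 0 y := (dotp_zero y).symm
    have := hmax (show (0 : Fin d → ℝ) ∈ B from ⟨fun j _ => rfl, by simp [N_zero hN]⟩)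
    simpa [dotp_zero] using this

/-- The set whose sup is `dualCoord N l y`. -/
def setD (N : (Fin d → ℝ) → ℝ) (l : ℕ) (y : Fin d → ℝ) : Set ℝ :=
  {r | ∃ K : Finset (Fin d), K.card ≤ l ∧ r = restStar N K (projK K y)}

lemma setD_nonempty (l : ℕ) (y : Fin d → ℝ) : (setD N l y).Nonempty :=
  ⟨restStar N ∅ (projK ∅ y), ∅, by simp, rfl⟩

lemma restStar_le_M (hN : IsNorm N) (K : Finset (Fin d)) (y : Fin d → ℝ) {M : ℝ}
    (hM : ∀ x : Fin d → ℝ, N x ≤ 1 → |dotp x y| ≤ M) : restStar N K (projK K y) ≤ M := by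
  rw [restStar_proj_eq]
  apply csSup_le ⟨0, zero_mem_setK hN K y⟩
  rintro r ⟨x, _, hx1, rfl⟩
  exact (le_abs_self _).trans (hM x hx1)

lemma setD_bddAbove (hN : IsNorm N) (l : ℕ) (y : Fin d → ℝ) : BddAbove (setD N l y) := by
  obtain ⟨M, hM0, hM⟩ := dotp_bound hN y
  refine ⟨M, fun r hr => ?_⟩
  obtain ⟨K, _, rfl⟩ := hr
  exact restStar_le_M hN K y (fun x h => hM x h)

lemma dualCoord_attain (l : ℕ) (y : Fin d → ℝ) :
    ∃ K : Finset (Fin d), K.card ≤ l ∧ dualCoord N l y = restStar N K (projK K y) := by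
  have hfin : (setD N l y).Finite := by
    have : setD N l y ⊆ (fun K : Finset (Fin d) => restStar N K (projK K y)) '' Set.univ := by
      rintro r ⟨K, _, rfl⟩; exact ⟨K, trivial, rfl⟩
    exact ((Set.finite_univ).image _).subset this
  have := (setD_nonempty (N := N) l y).csSup_mem hfin
  obtain ⟨K, hK, h⟩ := this
  exact ⟨K, hK, h⟩

lemma restStar_nonneg (hN : IsNorm N) (K : Finset (Fin d)) (y : Fin d → ℝ) :
    0 ≤ restStar N K (projK K y) := by
  rw [restStar_proj_eq]
  exact le_csSup (setK_bddAbove hN K y) (zero_mem_setK hN K y)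

lemma dualCoord_nonneg (hN : IsNorm N) (l : ℕ) (y : Fin d → ℝ) :
    0 ≤ dualCoord N l y := by
  have h0 : restStar N ∅ (projK ∅ y) ∈ setD N l y := ⟨∅, by simp, rfl⟩
  exact (restStar_nonneg hN ∅ y).trans (le_csSup (setD_bddAbove hN l y) h0)

lemma restStar_le_dualCoord (hN : IsNorm N) {K : Finset (Fin d)} {l : ℕ}
    (hK : K.card ≤ l) (y : Fin d → ℝ) :
    restStar N K (projK K y) ≤ dualCoord N l y :=
  le_csSup (setD_bddAbove hN l y) ⟨K, hK, rfl⟩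

lemma dualCoord_zero_le (hN : IsNorm N) (y : Fin d → ℝ) : dualCoord N 0 y ≤ 0 := by
  apply csSup_le (setD_nonempty 0 y)
  rintro r ⟨K, hK, rfl⟩
  rw [Finset.card_eq_zero.mp (Nat.le_zero.mp hK)]
  rw [restStar_proj_eq]
  apply csSup_le ⟨0, zero_mem_setK hN ∅ y⟩
  rintro r ⟨x, hx, _, rfl⟩
  have : x = 0 := funext fun j => hx j (Finset.notMem_empty j)
  simp [this, dotp_zero]


lemma ereal_le_of_forall_sub (a : ℝ) (b : EReal)
    (h : ∀ ε : ℝ, 0 < ε → ((a - ε : ℝ) : EReal) ≤ b) : (a : EReal) ≤ b := by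
  induction b with
  | bot =>
      exfalso
      have := h 1 one_pos
      rw [le_bot_iff] at this
      exact EReal.coe_ne_bot _ this
  | coe r =>
      rw [EReal.coe_le_coe_iff]
      apply le_of_forall_pos_le_add
      intro ε hε
      have := EReal.coe_le_coe_iff.mp (h ε hε)
      linarith
  | top => exact le_top

lemma N_smul_pos (hN : IsNorm N) {a : ℝ} (ha : 0 ≤ a) (x : Fin d → ℝ) :
    N (a • x) = a * N x := by rw [hN.smul, abs_of_nonneg ha]

lemma capra_le_dualCoord (hN : IsNorm N) (x y : Fin d → ℝ) :
    capra N x y ≤ dualCoord N (ell0 x) y := by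
  rcases eq_or_ne x 0 with rfl | hx
  · rw [capra, if_pos rfl]; exact dualCoord_nonneg hN _ y
  · rw [capra, if_neg hx]
    have hNx := N_pos hN hx
    set K := suppF x with hK
    have hcard : K.card = ell0 x := (ell0_eq_card x).symm
    have hmem : dotp x y / N x ∈ setK N K y := by
      refine ⟨(N x)⁻¹ • x, ?_, ?_, ?_⟩
      · intro j hj
        simp only [hK, suppF, Finset.mem_filter, Finset.mem_univ, true_and, not_not] at hj
        simp [hj]
      · rw [N_smul_pos hN (by positivity)]
        rw [inv_mul_cancel₀ (ne_of_gt hNx)]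
      · rw [dotp_smul]; ring
    calc dotp x y / N x ≤ sSup (setK N K y) := le_csSup (setK_bddAbove hN K y) hmem
      _ = restStar N K (projK K y) := (restStar_proj_eq K y).symm
      _ ≤ dualCoord N (ell0 x) y := restStar_le_dualCoord hN (le_of_eq hcard) y

lemma suppF_indicator (J : Finset (Fin d)) :
    suppF (fun i => if i ∈ J then (1:ℝ) else 0) = J := by
  ext i; by_cases hi : i ∈ J <;> simp [suppF, hi]

lemma exists_ell0_eq {l : ℕ} (hl : l ≤ d) : ∃ x : Fin d → ℝ, ell0 x = l := by
  obtain ⟨J, -, hJ⟩ := Finset.exists_subset_card_eq (by simpa using hl :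
    l ≤ (Finset.univ : Finset (Fin d)).card)
  exact ⟨fun i => if i ∈ J then 1 else 0, by rw [ell0_eq_card, suppF_indicator, hJ]⟩

lemma ell0_neg (x : Fin d → ℝ) : ell0 (-x) = ell0 x := by
  rw [ell0_eq_card, ell0_eq_card]
  congr 1
  ext i; simp [suppF]

lemma capra_neg (N : (Fin d → ℝ) → ℝ) (hN : IsNorm N) (x y : Fin d → ℝ) :
    capra N (-x) y = - capra N x y := by
  rcases eq_or_ne x 0 with rfl | hx
  · simp [capra]
  · rw [capra, capra, if_neg hx, if_neg (neg_ne_zero.mpr hx), dotp_neg]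
    have : N (-x) = N x := by
      have := hN.smul (-1) x; simpa using this
    rw [this, neg_div]

lemma key_perturb (hN : IsNorm N) (y : Fin d → ℝ) {l : ℕ} (hl : l ≤ d)
    {ε : ℝ} (hε : 0 < ε) :
    ∃ x : Fin d → ℝ, ell0 x = l ∧ dualCoord N l y - ε < capra N x y := by
  rcases Nat.eq_zero_or_pos l with rfl | hlpos
  · refine ⟨0, by simp [ell0], ?_⟩
    rw [capra, if_pos rfl]
    have := dualCoord_zero_le hN y
    linarith
  obtain ⟨K, hKl, hD⟩ := dualCoord_attain l y
  obtain ⟨xs, hxsK, hxs1, hEq, hpos⟩ := restStar_attain hN K y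
  have hDval : dualCoord N l y = dotp xs y := by rw [hD, hEq]
  rcases eq_or_ne xs 0 with rfl | hxs0
  · -- dualCoord = 0; pick sign-adjusted indicator
    rw [dotp_zero] at hDval
    obtain ⟨x₀, hx₀⟩ := exists_ell0_eq hl
    rcases le_or_gt 0 (capra N x₀ y) with h | h
    · exact ⟨x₀, hx₀, by rw [hDval]; linarith⟩
    · refine ⟨-x₀, by rw [ell0_neg, hx₀], ?_⟩
      rw [capra_neg N hN, hDval]; linarith
  · have hNxs := N_pos hN hxs0
    have hkK : suppF xs ⊆ K := by
      intro j hj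
      simp only [suppF, Finset.mem_filter, Finset.mem_univ, true_and] at hj
      by_contra hjK
      exact hj (hxsK j hjK)
    have hkl : ell0 xs ≤ l := le_trans (by rw [ell0_eq_card]; exact Finset.card_le_card hkK) hKl
    have hcapxs : dualCoord N l y ≤ capra N xs y := by
      rw [capra, if_neg hxs0, hDval, le_div_iff₀ hNxs]
      nlinarith
    rcases eq_or_lt_of_le hkl with heq | hlt
    · exact ⟨xs, heq, by linarith⟩
    · -- perturb: add t on l - k fresh coordinates
      have hcardc : l - ell0 xs ≤ (Finset.univ \ suppF xs).card := by
        rw [Finset.card_sdiff_of_subset (Finset.subset_univ _)]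
        simp only [Finset.card_univ, Fintype.card_fin]
        rw [← ell0_eq_card]
        omega
      obtain ⟨J, hJsub, hJcard⟩ := Finset.exists_subset_card_eq hcardc
      set v : Fin d → ℝ := fun i => if i ∈ J then 1 else 0 with hv
      have hdisj : Disjoint (suppF xs) J := by
        rw [Finset.disjoint_right]
        intro i hiJ
        have := hJsub hiJ
        simp only [Finset.mem_sdiff] at this
        exact this.2
      have hsupp : ∀ t : ℝ, t ≠ 0 → suppF (xs + t • v) = suppF xs ∪ J := by
        intro t ht
        ext i
        simp only [suppF, Finset.mem_filter, Finset.mem_univ, true_and, Finset.mem_union,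
          Pi.add_apply, Pi.smul_apply, smul_eq_mul, hv]
        by_cases hiJ : i ∈ J
        · have hxsi : xs i = 0 := by
            by_contra hne
            exact (Finset.disjoint_right.mp hdisj hiJ) (by simp [suppF, hne])
          simp [hiJ, hxsi, ht]
        · simp [hiJ]
      have hell : ∀ t : ℝ, t ≠ 0 → ell0 (xs + t • v) = l := by
        intro t ht
        rw [ell0_eq_card, hsupp t ht, Finset.card_union_of_disjoint hdisj, hJcard,
          ← ell0_eq_card]
        omega
      -- continuity
      set f : ℝ → ℝ := fun t => dotp (xs + t • v) y / N (xs + t • v) with hf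
      have hg : Continuous (fun t : ℝ => xs + t • v) := continuous_const.add (continuous_id.smul continuous_const)
      have hfc : ContinuousAt f 0 := by
        apply ContinuousAt.div
        · exact ((dotp_continuous y).comp hg).continuousAt
        · exact ((N_continuous hN).comp hg).continuousAt
        · simpa using ne_of_gt hNxs
      have hf0 : f 0 = capra N xs y := by
        simp only [hf, zero_smul, add_zero]
        rw [capra, if_neg hxs0]
      have hopen : ∀ᶠ t in nhds (0:ℝ), f t > dualCoord N l y - ε := by
        have : f 0 > dualCoord N l y - ε := by rw [hf0]; linarith
        exact hfc.eventually (eventually_gt_nhds this)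
      have : ∀ᶠ t in nhdsWithin (0:ℝ) {0}ᶜ, f t > dualCoord N l y - ε :=
        hopen.filter_mono nhdsWithin_le_nhds
      obtain ⟨t, htf, ht0⟩ := (this.and (eventually_mem_nhdsWithin)).exists
      refine ⟨xs + t • v, hell t ht0, ?_⟩
      have hne : xs + t • v ≠ 0 := by
        intro h0
        have := hell t ht0
        rw [h0] at this
        simp [ell0] at this
        omega
      rw [capra, if_neg hne]
      exact htf

theorem statement10 {d : ℕ} (N : (Fin d → ℝ) → ℝ) (hN : IsNorm N)
    (φ : ℕ → EReal) (y : Fin d → ℝ) :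
    capraConj N (fun x => φ (ell0 x)) y
      = ⨆ l : Fin (d + 1), (((dualCoord N l y : ℝ) : EReal) + (- φ l)) := by
  classical
  simp only [capraConj]
  apply le_antisymm
  · apply iSup_le
    intro x
    have hld : ell0 x ≤ d := ell0_le x
    refine le_trans ?_ (le_iSup
      (fun l : Fin (d + 1) => (((dualCoord N l y : ℝ) : EReal) + (- φ l)))
      ⟨ell0 x, Nat.lt_succ_of_le hld⟩)
    exact add_le_add_left (EReal.coe_le_coe_iff.mpr (capra_le_dualCoord hN x y)) _
  · apply iSup_le
    intro L
    have hld : (L : ℕ) ≤ d := Nat.lt_succ_iff.mp L.isLt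
    by_cases hb : φ (L : ℕ) = ⊥
    · obtain ⟨x, hx⟩ := exists_ell0_eq hld
      refine le_trans ?_ (le_iSup _ x)
      rw [hx, hb]
      simp only [EReal.neg_bot]
      rw [EReal.add_top_of_ne_bot (EReal.coe_ne_bot _),
        EReal.add_top_of_ne_bot (EReal.coe_ne_bot _)]
    · by_cases ht : φ (L : ℕ) = ⊤
      · rw [ht]
        simp only [EReal.neg_top, EReal.add_bot]
        exact bot_le
      · obtain ⟨c, hc⟩ : ∃ c : ℝ, φ (L : ℕ) = (c : EReal) := by
          lift (φ (L : ℕ)) to ℝ using ⟨ht, hb⟩ with c hc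
          exact ⟨c, rfl⟩
        rw [hc, ← EReal.coe_neg, ← EReal.coe_add]
        apply ereal_le_of_forall_sub
        intro ε hε
        obtain ⟨x, hx, hcap⟩ := key_perturb hN y hld hε
        refine le_trans ?_ (le_iSup _ x)
        rw [hx, hc, ← EReal.coe_neg, ← EReal.coe_add, EReal.coe_le_coe_iff]
        linarith
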